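/- Let M be a type II₁ factor with trace τ, let T ∈ M, and suppose that for every operator S in any type II₁ factor containing the relevant data and every ε > 0 there exists a projection Q with τ(Q) = 1/2 and ‖SQ − QSQ‖₂ < ε (half-splitting property). Then for every ε > 0 and every positive integer n there exist projections 0 = P₀ < P₁ < ⋯ < P_{2ⁿ} = I in M with τ(P_j) = j/2ⁿ and ‖TP_j − P_jTP_j‖₂ ≤ ε for all 0 ≤ j ≤ 2ⁿ. -/

import Mathlib

open scoped ComplexOrder

variable {H : Type*} [NormedAddCommGroup H] [InnerProductSpace ℂ H] [CompleteSpace H]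

/-- The orthogonal projection (as an operator on `H`) onto a closed submodule. -/
noncomputable def projOnto (K : Submodule ℂ H) (hK : IsClosed (K : Set H)) : H →L[ℂ] H :=
  haveI : CompleteSpace K := hK.completeSpace_coe
  K.subtypeL ∘L K.orthogonalProjectionOnto

/-- `N(T)`: the projection onto the kernel of `T`. -/
noncomputable def kerProj (T : H →L[ℂ] H) : H →L[ℂ] H :=
  projOnto (LinearMap.ker (T : H →ₗ[ℂ] H)) (ContinuousLinearMap.isClosed_ker T)

/-- `R(T)`: the projection onto the closure of the range of `T`. -/
noncomputable def rangeProj (T : H →L[ℂ] H) : H →L[ℂ] H :=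
  projOnto (LinearMap.range (T : H →ₗ[ℂ] H)).topologicalClosure (Submodule.isClosed_topologicalClosure _)

/-- A (self-adjoint, idempotent) projection operator. -/
def IsProjection (p : H →L[ℂ] H) : Prop := IsSelfAdjoint p ∧ p * p = p

/-- `τ` is a faithful tracial state on the von Neumann algebra `M`. -/
structure IsFiniteTrace (M : VonNeumannAlgebra H) (τ : (H →L[ℂ] H) → ℂ) : Prop where
  map_one : τ 1 = 1
  map_add : ∀ x y, τ (x + y) = τ x + τ y
  map_smul : ∀ (c : ℂ) (x : H →L[ℂ] H), τ (c • x) = c * τ x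
  tracial : ∀ x ∈ M, ∀ y ∈ M, τ (x * y) = τ (y * x)
  nonneg : ∀ x ∈ M, 0 ≤ τ (star x * x)
  faithful : ∀ x ∈ M, τ (star x * x) = 0 → x = 0

/-- The trace 2-norm `‖x‖₂ = τ(x*x)^{1/2}`. -/
noncomputable def norm2 (τ : (H →L[ℂ] H) → ℂ) (x : H →L[ℂ] H) : ℝ :=
  Real.sqrt (τ (star x * x)).re

/-- `M` is a type II₁ factor with faithful normal tracial state `τ`: a factor whose
trace takes a continuum of values on subprojections of any projection. -/
structure IsTypeII1Factor (M : VonNeumannAlgebra H) (τ : (H →L[ℂ] H) → ℂ) : Prop where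
  trace : IsFiniteTrace M τ
  factor : ∀ z ∈ M, (∀ x ∈ M, z * x = x * z) → ∃ c : ℂ, z = c • (1 : H →L[ℂ] H)
  diffuse : ∀ p ∈ M, IsProjection p → ∀ t : ℝ, 0 ≤ t → t ≤ (τ p).re →
    ∃ q ∈ M, IsProjection q ∧ q * p = q ∧ τ q = (t : ℂ)

set_option linter.unusedSectionVars false

variable {M : VonNeumannAlgebra H} {τ : (H →L[ℂ] H) → ℂ}

section AuxST4

variable {M : VonNeumannAlgebra H} {τ : (H →L[ℂ] H) → ℂ}

lemma st4_tau_zero (h : IsFiniteTrace M τ) : τ 0 = 0 := by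
  have := h.map_smul 0 1
  simpa using this

lemma st4_tau_sub (h : IsFiniteTrace M τ) (x y : H →L[ℂ] H) : τ (x - y) = τ x - τ y := by
  have h1 : τ (x - y) + τ y = τ x := by
    rw [← h.map_add]; congr 1; abel
  linear_combination h1

lemma st4_nsq_nonneg (h : IsFiniteTrace M τ) {x : H →L[ℂ] H} (hx : x ∈ M) :
    0 ≤ (τ (star x * x)).re :=
  (Complex.nonneg_iff.1 (h.nonneg x hx)).1

lemma st4_norm2_nonneg (τ : (H →L[ℂ] H) → ℂ) (x : H →L[ℂ] H) : 0 ≤ norm2 τ x :=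
  Real.sqrt_nonneg _

lemma st4_norm2_zero (h : IsFiniteTrace M τ) : norm2 τ 0 = 0 := by
  simp [norm2, st4_tau_zero h]

lemma st4_smul_mem (hx : x ∈ M) (c : ℂ) : c • x ∈ M :=
  M.toStarSubalgebra.smul_mem hx c

/-- Triangle inequality for `norm2` on `M`. -/
lemma st4_norm2_add_le (h : IsFiniteTrace M τ) {x y : H →L[ℂ] H}
    (hx : x ∈ M) (hy : y ∈ M) : norm2 τ (x + y) ≤ norm2 τ x + norm2 τ y := by
  set a := (τ (star x * x)).re with ha
  set b := (τ (star y * y)).re with hb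
  set s := (τ (star x * y) + τ (star y * x)).re with hs
  have hexp : ∀ t : ℝ,
      (τ (star (x + (t:ℂ) • y) * (x + (t:ℂ) • y))).re = b * (t * t) + s * t + a := by
    intro t
    have hst : star (x + (t:ℂ) • y) = star x + (t:ℂ) • star y := by
      simp [star_smul, Complex.conj_ofReal]
    rw [hst]
    have hmul : (star x + (t:ℂ) • star y) * (x + (t:ℂ) • y)
        = star x * x + (t:ℂ) • (star x * y) + (t:ℂ) • (star y * x)
          + ((t:ℂ) * (t:ℂ)) • (star y * y) := by
      rw [add_mul, mul_add, mul_add, mul_smul_comm, smul_mul_assoc, smul_mul_assoc,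
        mul_smul_comm, smul_smul]
      abel
    rw [hmul, h.map_add, h.map_add, h.map_add, h.map_smul, h.map_smul, h.map_smul,
      hs, ha, hb]
    simp only [Complex.add_re, Complex.mul_re, Complex.ofReal_re, Complex.ofReal_im,
      Complex.mul_im]
    ring
  have hquad : ∀ t : ℝ, 0 ≤ b * (t * t) + s * t + a := by
    intro t
    rw [← hexp t]
    exact st4_nsq_nonneg h (add_mem hx (st4_smul_mem hy _))
  have hdisc := discrim_le_zero hquad
  rw [discrim] at hdisc
  have ha0 : 0 ≤ a := st4_nsq_nonneg h hx
  have hb0 : 0 ≤ b := st4_nsq_nonneg h hy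
  have hsle : s ≤ 2 * Real.sqrt a * Real.sqrt b := by
    have h1 : s ^ 2 ≤ (2 * Real.sqrt a * Real.sqrt b) ^ 2 := by
      have : (2 * Real.sqrt a * Real.sqrt b) ^ 2 = 4 * a * b := by
        rw [mul_pow, mul_pow, Real.sq_sqrt ha0, Real.sq_sqrt hb0]; ring
      rw [this]; nlinarith [hdisc]
    have h2 : 0 ≤ 2 * Real.sqrt a * Real.sqrt b := by positivity
    nlinarith [sq_nonneg (s - 2 * Real.sqrt a * Real.sqrt b), sq_nonneg (s + 2 * Real.sqrt a * Real.sqrt b)]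
  have hexp2 : (τ (star (x + y) * (x + y))).re = a + s + b := by
    have : star (x + y) * (x + y) = star x * x + (star x * y + star y * x) + star y * y := by
      simp [mul_add, add_mul, star_add]; abel
    rw [this, h.map_add, h.map_add, h.map_add, ha, hb, hs]
    simp only [Complex.add_re]
    try ring
  have key : (τ (star (x + y) * (x + y))).re ≤ (Real.sqrt a + Real.sqrt b) ^ 2 := by
    rw [hexp2]
    have : (Real.sqrt a + Real.sqrt b) ^ 2
        = a + 2 * Real.sqrt a * Real.sqrt b + b := by
      rw [add_sq, Real.sq_sqrt ha0, Real.sq_sqrt hb0]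
      try ring
    rw [this]; linarith
  calc norm2 τ (x + y) = Real.sqrt (τ (star (x + y) * (x + y))).re := rfl
    _ ≤ Real.sqrt ((Real.sqrt a + Real.sqrt b) ^ 2) := Real.sqrt_le_sqrt key
    _ = Real.sqrt a + Real.sqrt b := Real.sqrt_sq (by positivity)
    _ = norm2 τ x + norm2 τ y := rfl

/-- Left contraction by a projection. -/
lemma st4_norm2_proj_mul_le (h : IsFiniteTrace M τ) {p X : H →L[ℂ] H}
    (hp : p ∈ M) (hpp : IsProjection p) (hX : X ∈ M) :
    norm2 τ (p * X) ≤ norm2 τ X := by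
  have hps : star p = p := hpp.1
  have h1 : star (p * X) * (p * X) = star X * (p * X) := by
    rw [star_mul, hps, mul_assoc, ← mul_assoc p p X, hpp.2]
  have h2 : star ((1 - p) * X) * ((1 - p) * X) = star X * X - star X * (p * X) := by
    have hq : (1 - p) * (1 - p) = 1 - p := by
      have := hpp.2
      noncomm_ring [this]
    rw [star_mul, star_sub, star_one, hps, mul_assoc, ← mul_assoc (1-p) (1-p) X, hq]
    noncomm_ring
  have h3 : 0 ≤ (τ (star ((1 - p) * X) * ((1 - p) * X))).re :=
    st4_nsq_nonneg h (mul_mem (sub_mem (one_mem M) hp) hX)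
  rw [h2, st4_tau_sub h] at h3
  apply Real.sqrt_le_sqrt
  rw [h1]
  simp only [Complex.sub_re] at h3
  linarith

/-- Right contraction by a projection. -/
lemma st4_norm2_mul_proj_le (h : IsFiniteTrace M τ) {p X : H →L[ℂ] H}
    (hp : p ∈ M) (hpp : IsProjection p) (hX : X ∈ M) :
    norm2 τ (X * p) ≤ norm2 τ X := by
  have hps : star p = p := hpp.1
  have hXm : star X * X ∈ M := mul_mem (star_mem hX) hX
  have h1 : τ (star (X * p) * (X * p)) = τ (star X * X * p) := by
    have : star (X * p) * (X * p) = p * (star X * X * p) := by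
      rw [star_mul, hps]; noncomm_ring
    rw [this, h.tracial p hp _ (mul_mem hXm hp), mul_assoc, hpp.2]
  have h2 : τ (star (X * (1-p)) * (X * (1-p))) = τ (star X * X) - τ (star X * X * p) := by
    have hq : (1 - p) * (1 - p) = 1 - p := by
      have := hpp.2
      noncomm_ring [this]
    have hqm : (1:H →L[ℂ] H) - p ∈ M := sub_mem (one_mem M) hp
    have : star (X * (1-p)) * (X * (1-p)) = (1-p) * (star X * X * (1-p)) := by
      rw [star_mul, star_sub, star_one, hps]; noncomm_ring
    rw [this, h.tracial _ hqm _ (mul_mem hXm hqm), mul_assoc, hq, mul_sub, mul_one,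
      st4_tau_sub h]
  have h3 : 0 ≤ (τ (star (X * (1-p)) * (X * (1-p)))).re :=
    st4_nsq_nonneg h (mul_mem hX (sub_mem (one_mem M) hp))
  rw [h2] at h3
  apply Real.sqrt_le_sqrt
  rw [h1]
  simp only [Complex.sub_re] at h3
  linarith

/-- Adjacent domination implies chain domination. -/
lemma st4_chain {m : ℕ} (P : Fin (m+1) → (H →L[ℂ] H))
    (hidem : ∀ j, P j * P j = P j)
    (hadj : ∀ k : ℕ, (hk : k < m) → P ⟨k+1, by omega⟩ * P ⟨k, by omega⟩ = P ⟨k, by omega⟩) :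
    ∀ i j : Fin (m+1), i ≤ j → P j * P i = P i := by
  have key : ∀ d i : ℕ, (h : i + d ≤ m) →
      P ⟨i+d, by omega⟩ * P ⟨i, by omega⟩ = P ⟨i, by omega⟩ := by
    intro d
    induction d with
    | zero => intro i h; exact hidem ⟨i, by omega⟩
    | succ d ih =>
      intro i h
      have h1 := ih i (by omega)
      have h2 := hadj (i+d) (by omega)
      have h3 : P ⟨i + (d+1), by omega⟩ * P ⟨i, by omega⟩
          = P ⟨i+d+1, by omega⟩ * (P ⟨i+d, by omega⟩ * P ⟨i, by omega⟩) := by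
        rw [h1]
        rfl
      rw [h3, ← mul_assoc, h2, h1]
  intro i j hij
  have h := key ((j:ℕ) - (i:ℕ)) (i:ℕ) (by omega)
  have hjv : (⟨(i:ℕ) + ((j:ℕ) - (i:ℕ)), by omega⟩ : Fin (m+1)) = j := by
    apply Fin.ext; simp; omega
  have hiv : (⟨(i:ℕ), by omega⟩ : Fin (m+1)) = i := by
    apply Fin.ext; simp
  rw [hjv, hiv] at h
  exact h

lemma st4_distinct {m : ℕ} (P : Fin (m+1) → (H →L[ℂ] H)) (τ : (H →L[ℂ] H) → ℂ)
    (c : ℂ) (hc : c ≠ 0) (htr : ∀ j, τ (P j) = ((j:ℕ):ℂ)/c) :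
    ∀ i j : Fin (m+1), i < j → P i ≠ P j := by
  intro i j hij heq
  have h1 := htr i
  rw [heq, htr j] at h1
  have h2 : ((i:ℕ):ℂ) = ((j:ℕ):ℂ) := by
    field_simp at h1; exact_mod_cast h1.symm
  have : (i:ℕ) = (j:ℕ) := Nat.cast_injective h2
  have : ¬ (i < j) := by simp [Fin.lt_def, this]
  exact this hij

lemma st4_proj_one_sub {p : H →L[ℂ] H} (hp : IsProjection p) : IsProjection (1 - p) := by
  refine ⟨?_, ?_⟩
  · exact (IsSelfAdjoint.one _).sub hp.1
  · have := hp.2; noncomm_ring [this]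

end AuxST4

set_option maxHeartbeats 2000000 in
/-- Lemma 2.5. Assuming the half-splitting property in every corner of `M`
(Lemma 2.6 of the paper), every `T ∈ M` admits, for each `ε > 0` and `n`, an increasing
chain of projections `0 = P₀ < P₁ < ⋯ < P_{2ⁿ} = I` with `τ(P_j) = j/2ⁿ` and
`‖TP_j − P_jTP_j‖₂ ≤ ε`. -/
theorem stmt_4 {H : Type*} [NormedAddCommGroup H] [InnerProductSpace ℂ H] [CompleteSpace H]
    (M : VonNeumannAlgebra H) (τ : (H →L[ℂ] H) → ℂ) (hM : IsTypeII1Factor M τ)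
    (halfsplit : ∀ p ∈ M, IsProjection p → p ≠ 0 →
      ∀ S ∈ M, S = p * S * p → ∀ ε : ℝ, 0 < ε →
        ∃ Q ∈ M, IsProjection Q ∧ Q * p = Q ∧ τ Q = τ p / 2 ∧
          norm2 τ (S * Q - Q * S * Q) < ε)
    (T : H →L[ℂ] H) (hT : T ∈ M) (ε : ℝ) (hε : 0 < ε) (n : ℕ) :
    ∃ P : Fin (2 ^ n + 1) → (H →L[ℂ] H),
      P 0 = 0 ∧ P (Fin.last (2 ^ n)) = 1 ∧
      (∀ j, P j ∈ M ∧ IsProjection (P j) ∧ τ (P j) = ((j : ℕ) : ℂ) / (2 ^ n : ℂ) ∧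
        norm2 τ (T * P j - P j * T * P j) ≤ ε) ∧
      (∀ i j : Fin (2 ^ n + 1), i ≤ j → P j * P i = P i) ∧
      (∀ i j : Fin (2 ^ n + 1), i < j → P i ≠ P j) := by
  have htr : IsFiniteTrace M τ := hM.trace
  induction n generalizing ε with
  | zero =>
    refine ⟨fun j => if (j:ℕ) = 0 then 0 else 1, ?_, ?_, ?_, ?_, ?_⟩
    · simp
    · simp [Fin.last]
    · intro j
      by_cases hj0 : (j:ℕ) = 0
      · simp only [if_pos hj0]
        refine ⟨zero_mem M, ⟨by simp [IsSelfAdjoint], by simp⟩, ?_, ?_⟩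
        · simp [hj0, st4_tau_zero htr]
        · simp [st4_norm2_zero htr, hε.le]
      · simp only [if_neg hj0]
        have hj1 : (j:ℕ) = 1 := by have := j.isLt; omega
        refine ⟨one_mem M, ⟨IsSelfAdjoint.one _, one_mul 1⟩, ?_, ?_⟩
        · simp [hj1, htr.map_one]
        · simp [st4_norm2_zero htr, hε.le]
    · intro i j hij
      by_cases hi0 : (i:ℕ) = 0
      · simp [hi0]
      · have hj0 : (j:ℕ) ≠ 0 := by
          have := Fin.le_def.mp hij; omega
        simp [hi0, hj0]
    · intro i j hij heq
      have hi0 : (i:ℕ) = 0 := by have := Fin.lt_def.mp hij; have := j.isLt; omega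
      have hj1 : (j:ℕ) = 1 := by have := Fin.lt_def.mp hij; have := j.isLt; omega
      simp only [hi0, hj1] at heq
      norm_num at heq
      have h1 : τ (0 : H →L[ℂ] H) = τ 1 := by rw [heq]
      rw [st4_tau_zero htr, htr.map_one] at h1
      exact one_ne_zero h1.symm
  | succ n ih =>
    obtain ⟨P, hP0, hPlast, hPall, hPmono, -⟩ := ih (ε/3) (by linarith)
    have h2 : 2^(n+1) = 2*2^n := by rw [pow_succ]; ring
    have h2n : (2:ℂ)^n ≠ 0 := pow_ne_zero _ two_ne_zero
    have hPmem : ∀ j, P j ∈ M := fun j => (hPall j).1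
    have hPsa : ∀ j, star (P j) = P j := fun j => (hPall j).2.1.1
    have hPidem : ∀ j, P j * P j = P j := fun j => (hPall j).2.1.2
    have hPtr : ∀ j, τ (P j) = ((j:ℕ):ℂ) / (2^n : ℂ) := fun j => (hPall j).2.2.1
    have hPnorm : ∀ j, norm2 τ (T * P j - P j * T * P j) ≤ ε/3 := fun j => (hPall j).2.2.2
    -- adjacent relations in ℕ-indexed form
    have hqp : ∀ (m : ℕ) (hm : m < 2^n),
        P ⟨m+1, by omega⟩ * P ⟨m, by omega⟩ = P ⟨m, by omega⟩ := by
      intro m hm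
      exact hPmono ⟨m, by omega⟩ ⟨m+1, by omega⟩ (by simp [Fin.le_def])
    have hpq : ∀ (m : ℕ) (hm : m < 2^n),
        P ⟨m, by omega⟩ * P ⟨m+1, by omega⟩ = P ⟨m, by omega⟩ := by
      intro m hm
      have h := congrArg star (hqp m hm)
      simp only [star_mul, hPsa] at h
      exact h
    -- interval projections
    obtain ⟨e, he⟩ : ∃ e : Fin (2^n) → (H →L[ℂ] H), ∀ (m : ℕ) (hm : m < 2^n),
        e ⟨m, hm⟩ = P ⟨m+1, by omega⟩ - P ⟨m, by omega⟩ :=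
      ⟨fun k => P ⟨k.val+1, by have := k.isLt; omega⟩ - P ⟨k.val, by have := k.isLt; omega⟩,
        fun m hm => rfl⟩
    have hemem : ∀ k : Fin (2^n), e k ∈ M := by
      rintro ⟨m, hm⟩; rw [he m hm]; exact sub_mem (hPmem _) (hPmem _)
    have hesa : ∀ (m : ℕ) (hm : m < 2^n), star (e ⟨m, hm⟩) = e ⟨m, hm⟩ := by
      intro m hm; rw [he m hm, star_sub, hPsa, hPsa]
    have heidem : ∀ (m : ℕ) (hm : m < 2^n), e ⟨m, hm⟩ * e ⟨m, hm⟩ = e ⟨m, hm⟩ := by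
      intro m hm
      rw [he m hm, sub_mul, mul_sub, mul_sub, hPidem, hPidem, hqp m hm, hpq m hm]
      abel
    have heproj : ∀ k : Fin (2^n), IsProjection (e k) := by
      rintro ⟨m, hm⟩; exact ⟨hesa m hm, heidem m hm⟩
    have htre : ∀ (m : ℕ) (hm : m < 2^n), τ (e ⟨m, hm⟩) = 1 / (2^n : ℂ) := by
      intro m hm
      rw [he m hm, st4_tau_sub htr, hPtr, hPtr]
      simp only [Fin.val_mk]
      push_cast
      field_simp
      ring
    have hene : ∀ k : Fin (2^n), e k ≠ 0 := by
      rintro ⟨m, hm⟩ h0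
      have h1 := htre m hm
      rw [h0, st4_tau_zero htr] at h1
      exact h2n (by simp at h1; exact h1.symm)
    -- compressed operator and half-splitting
    obtain ⟨S, hS⟩ : ∃ S : Fin (2^n) → (H →L[ℂ] H), ∀ k, S k = e k * T * e k :=
      ⟨_, fun k => rfl⟩
    have hSmem : ∀ k, S k ∈ M := by
      intro k; rw [hS k]; exact mul_mem (mul_mem (hemem k) hT) (hemem k)
    have hScorner : ∀ k, S k = e k * S k * e k := by
      rintro ⟨m, hm⟩
      rw [hS]
      have ha : e ⟨m,hm⟩ * (e ⟨m,hm⟩ * T * e ⟨m,hm⟩) = e ⟨m,hm⟩ * T * e ⟨m,hm⟩ := by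
        rw [← mul_assoc, ← mul_assoc, heidem m hm]
      rw [ha, mul_assoc (e ⟨m,hm⟩ * T) (e ⟨m,hm⟩) (e ⟨m,hm⟩), heidem m hm]
    choose Q hQmem hQproj hQle hQtr hQnorm using
      fun k : Fin (2^n) => halfsplit (e k) (hemem k) (heproj k) (hene k) (S k) (hSmem k)
        (hScorner k) (ε/3) (by linarith)
    have hQsa : ∀ k, star (Q k) = Q k := fun k => (hQproj k).1
    have hQidem : ∀ k, Q k * Q k = Q k := fun k => (hQproj k).2
    have heQ : ∀ (m : ℕ) (hm : m < 2^n), e ⟨m,hm⟩ * Q ⟨m,hm⟩ = Q ⟨m,hm⟩ := by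
      intro m hm
      have h := congrArg star (hQle ⟨m,hm⟩)
      rwa [star_mul, hesa m hm, hQsa] at h
    have heP : ∀ (m : ℕ) (hm : m < 2^n), e ⟨m,hm⟩ * P ⟨m, by omega⟩ = 0 := by
      intro m hm
      rw [he m hm, sub_mul, hqp m hm, hPidem, sub_self]
    have hQp : ∀ (m : ℕ) (hm : m < 2^n), Q ⟨m,hm⟩ * P ⟨m, by omega⟩ = 0 := by
      intro m hm
      rw [← hQle ⟨m,hm⟩, mul_assoc, heP m hm, mul_zero]
    have hpQ : ∀ (m : ℕ) (hm : m < 2^n), P ⟨m, by omega⟩ * Q ⟨m,hm⟩ = 0 := by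
      intro m hm
      have h := congrArg star (hQp m hm)
      rwa [star_mul, hQsa, hPsa, star_zero] at h
    have hPe : ∀ (m : ℕ) (hm : m < 2^n),
        P ⟨m+1, by omega⟩ * e ⟨m,hm⟩ = e ⟨m,hm⟩ := by
      intro m hm
      rw [he m hm, mul_sub, hPidem, hqp m hm]
    have hqQ : ∀ (m : ℕ) (hm : m < 2^n),
        P ⟨m+1, by omega⟩ * Q ⟨m,hm⟩ = Q ⟨m,hm⟩ := by
      intro m hm
      rw [← heQ m hm, ← mul_assoc, hPe m hm]
    have hQtr2 : ∀ (m : ℕ) (hm : m < 2^n), τ (Q ⟨m,hm⟩) = 1 / ((2:ℂ)^n * 2) := by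
      intro m hm
      rw [hQtr ⟨m,hm⟩, htre m hm]
      ring
    -- the refined chain
    obtain ⟨P', hP'⟩ : ∃ P' : Fin (2^(n+1)+1) → (H →L[ℂ] H), ∀ j : Fin (2^(n+1)+1),
        P' j = if hj : (j:ℕ) % 2 = 1
          then P ⟨(j:ℕ)/2, by have := j.isLt; omega⟩ + Q ⟨(j:ℕ)/2, by have := j.isLt; omega⟩
          else P ⟨(j:ℕ)/2, by have := j.isLt; omega⟩ :=
      ⟨_, fun j => rfl⟩
    have hP'odd : ∀ (j : Fin (2^(n+1)+1)) (m : ℕ) (hm : m < 2^n), (j:ℕ) = 2*m+1 →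
        P' j = P ⟨m, by omega⟩ + Q ⟨m, hm⟩ := by
      intro j m hm hjm
      rw [hP' j, dif_pos (by omega)]
      have h1 : (⟨(j:ℕ)/2, by have := j.isLt; omega⟩ : Fin (2^n+1)) = ⟨m, by omega⟩ := by
        apply Fin.ext; show (j:ℕ)/2 = m; omega
      have h1' : (⟨(j:ℕ)/2, by have := j.isLt; omega⟩ : Fin (2^n)) = ⟨m, hm⟩ := by
        apply Fin.ext; show (j:ℕ)/2 = m; omega
      rw [h1, h1']
    have hP'even : ∀ (j : Fin (2^(n+1)+1)) (m : ℕ) (hm : m < 2^n + 1), (j:ℕ) = 2*m →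
        P' j = P ⟨m, hm⟩ := by
      intro j m hm hjm
      rw [hP' j, dif_neg (by omega)]
      have h1 : (⟨(j:ℕ)/2, by have := j.isLt; omega⟩ : Fin (2^n+1)) = ⟨m, hm⟩ := by
        apply Fin.ext; show (j:ℕ)/2 = m; omega
      rw [h1]
    -- all the pointwise properties
    have hall : ∀ j : Fin (2^(n+1)+1), P' j ∈ M ∧ IsProjection (P' j) ∧
        τ (P' j) = ((j:ℕ):ℂ) / (2^(n+1) : ℂ) ∧
        norm2 τ (T * P' j - P' j * T * P' j) ≤ ε := by
      intro j
      by_cases hj : (j:ℕ) % 2 = 1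
      · -- odd case
        obtain ⟨m, hm, hjm⟩ : ∃ m, m < 2^n ∧ (j:ℕ) = 2*m+1 :=
          ⟨(j:ℕ)/2, by have := j.isLt; omega, by omega⟩
        rw [hP'odd j m hm hjm]
        have hmem : P ⟨m, by omega⟩ + Q ⟨m, hm⟩ ∈ M := add_mem (hPmem _) (hQmem _)
        have hproj : IsProjection (P ⟨m, by omega⟩ + Q ⟨m, hm⟩) := by
          constructor
          · show star _ = _
            rw [star_add, hPsa, hQsa]
          · rw [add_mul, mul_add, mul_add, hPidem, hQidem, hQp m hm, hpQ m hm]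
            abel
        refine ⟨hmem, hproj, ?_, ?_⟩
        · rw [htr.map_add, hPtr, hQtr2 m hm]
          simp only [Fin.val_mk]
          have hcast : ((j:ℕ):ℂ) = 2*((m:ℕ):ℂ)+1 := by exact_mod_cast hjm
          rw [hcast, pow_succ]
          field_simp
        · -- the norm estimate
          have hA : (1 - (P ⟨m, by omega⟩ + Q ⟨m, hm⟩)) *
                (T * P ⟨m, by omega⟩ - P ⟨m, by omega⟩ * T * P ⟨m, by omega⟩)
              = T * P ⟨m, by omega⟩ - (P ⟨m, by omega⟩ + Q ⟨m, hm⟩) * (T * P ⟨m, by omega⟩) := by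
            have hxp : (P ⟨m, by omega⟩ + Q ⟨m, hm⟩) * P ⟨m, by omega⟩ = P ⟨m, by omega⟩ := by
              rw [add_mul, hPidem, hQp m hm, add_zero]
            rw [mul_assoc (P ⟨m, by omega⟩) T (P ⟨m, by omega⟩), sub_mul, one_mul, mul_sub,
              ← mul_assoc (P ⟨m, by omega⟩ + Q ⟨m, hm⟩) (P ⟨m, by omega⟩)
                (T * P ⟨m, by omega⟩), hxp]
            abel
          have hB : (T * P ⟨m+1, by omega⟩ - P ⟨m+1, by omega⟩ * T * P ⟨m+1, by omega⟩) * Q ⟨m, hm⟩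
              = T * Q ⟨m, hm⟩ - P ⟨m+1, by omega⟩ * (T * Q ⟨m, hm⟩) := by
            rw [sub_mul, mul_assoc T (P ⟨m+1, by omega⟩) (Q ⟨m, hm⟩), hqQ m hm,
              mul_assoc (P ⟨m+1, by omega⟩ * T) (P ⟨m+1, by omega⟩) (Q ⟨m, hm⟩), hqQ m hm,
              mul_assoc (P ⟨m+1, by omega⟩) T (Q ⟨m, hm⟩)]
          have hC : (e ⟨m,hm⟩ - Q ⟨m, hm⟩) *
                (S ⟨m,hm⟩ * Q ⟨m, hm⟩ - Q ⟨m, hm⟩ * S ⟨m,hm⟩ * Q ⟨m, hm⟩)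
              = P ⟨m+1, by omega⟩ * (T * Q ⟨m, hm⟩) - P ⟨m, by omega⟩ * (T * Q ⟨m, hm⟩)
                - Q ⟨m, hm⟩ * (T * Q ⟨m, hm⟩) := by
            have hc1 : (e ⟨m,hm⟩ - Q ⟨m, hm⟩) * Q ⟨m, hm⟩ = 0 := by
              rw [sub_mul, heQ m hm, hQidem, sub_self]
            have hc2 : S ⟨m,hm⟩ * Q ⟨m, hm⟩ = e ⟨m,hm⟩ * (T * Q ⟨m, hm⟩) := by
              rw [hS ⟨m,hm⟩, mul_assoc, mul_assoc, heQ m hm]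
            have hc3 : (e ⟨m,hm⟩ - Q ⟨m, hm⟩) * e ⟨m,hm⟩ = e ⟨m,hm⟩ - Q ⟨m, hm⟩ := by
              rw [sub_mul, heidem m hm, hQle ⟨m,hm⟩]
            calc (e ⟨m,hm⟩ - Q ⟨m, hm⟩) *
                (S ⟨m,hm⟩ * Q ⟨m, hm⟩ - Q ⟨m, hm⟩ * S ⟨m,hm⟩ * Q ⟨m, hm⟩)
                = (e ⟨m,hm⟩ - Q ⟨m, hm⟩) * (S ⟨m,hm⟩ * Q ⟨m, hm⟩)
                  - ((e ⟨m,hm⟩ - Q ⟨m, hm⟩) * Q ⟨m, hm⟩) * (S ⟨m,hm⟩ * Q ⟨m, hm⟩) := by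
                  rw [mul_sub, mul_assoc (Q ⟨m, hm⟩) (S ⟨m,hm⟩) (Q ⟨m, hm⟩),
                    mul_assoc (e ⟨m,hm⟩ - Q ⟨m, hm⟩) (Q ⟨m, hm⟩) (S ⟨m,hm⟩ * Q ⟨m, hm⟩)]
              _ = (e ⟨m,hm⟩ - Q ⟨m, hm⟩) * (S ⟨m,hm⟩ * Q ⟨m, hm⟩) := by
                  rw [hc1, zero_mul, sub_zero]
              _ = ((e ⟨m,hm⟩ - Q ⟨m, hm⟩) * e ⟨m,hm⟩) * (T * Q ⟨m, hm⟩) := by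
                  rw [hc2, mul_assoc]
              _ = e ⟨m,hm⟩ * (T * Q ⟨m, hm⟩) - Q ⟨m, hm⟩ * (T * Q ⟨m, hm⟩) := by
                  rw [hc3, sub_mul]
              _ = P ⟨m+1, by omega⟩ * (T * Q ⟨m, hm⟩) - P ⟨m, by omega⟩ * (T * Q ⟨m, hm⟩)
                  - Q ⟨m, hm⟩ * (T * Q ⟨m, hm⟩) := by
                  rw [he m hm, sub_mul]
          have hid : T * (P ⟨m, by omega⟩ + Q ⟨m, hm⟩)
                - (P ⟨m, by omega⟩ + Q ⟨m, hm⟩) * T * (P ⟨m, by omega⟩ + Q ⟨m, hm⟩)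
              = (1 - (P ⟨m, by omega⟩ + Q ⟨m, hm⟩)) *
                  (T * P ⟨m, by omega⟩ - P ⟨m, by omega⟩ * T * P ⟨m, by omega⟩)
                + (T * P ⟨m+1, by omega⟩ - P ⟨m+1, by omega⟩ * T * P ⟨m+1, by omega⟩) * Q ⟨m, hm⟩
                + (e ⟨m,hm⟩ - Q ⟨m, hm⟩) *
                  (S ⟨m,hm⟩ * Q ⟨m, hm⟩ - Q ⟨m, hm⟩ * S ⟨m,hm⟩ * Q ⟨m, hm⟩) := by
            rw [hA, hB, hC]
            noncomm_ring
          rw [hid]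
          have hXp : T * P ⟨m, by omega⟩ - P ⟨m, by omega⟩ * T * P ⟨m, by omega⟩ ∈ M :=
            sub_mem (mul_mem hT (hPmem _)) (mul_mem (mul_mem (hPmem _) hT) (hPmem _))
          have hXq : T * P ⟨m+1, by omega⟩ - P ⟨m+1, by omega⟩ * T * P ⟨m+1, by omega⟩ ∈ M :=
            sub_mem (mul_mem hT (hPmem _)) (mul_mem (mul_mem (hPmem _) hT) (hPmem _))
          have hXS : S ⟨m,hm⟩ * Q ⟨m, hm⟩ - Q ⟨m, hm⟩ * S ⟨m,hm⟩ * Q ⟨m, hm⟩ ∈ M :=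
            sub_mem (mul_mem (hSmem _) (hQmem _))
              (mul_mem (mul_mem (hQmem _) (hSmem _)) (hQmem _))
          have hAmem := mul_mem (sub_mem (one_mem M) hmem) hXp
          have hBmem := mul_mem hXq (hQmem ⟨m,hm⟩)
          have hCmem := mul_mem (sub_mem (hemem ⟨m,hm⟩) (hQmem ⟨m,hm⟩)) hXS
          have htri1 := st4_norm2_add_le htr (add_mem hAmem hBmem) hCmem
          have htri2 := st4_norm2_add_le htr hAmem hBmem
          have hboundA : norm2 τ ((1 - (P ⟨m, by omega⟩ + Q ⟨m, hm⟩)) *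
              (T * P ⟨m, by omega⟩ - P ⟨m, by omega⟩ * T * P ⟨m, by omega⟩)) ≤ ε/3 :=
            le_trans (st4_norm2_proj_mul_le htr (sub_mem (one_mem M) hmem)
              (st4_proj_one_sub hproj) hXp) (hPnorm ⟨m, by omega⟩)
          have hboundB : norm2 τ ((T * P ⟨m+1, by omega⟩
              - P ⟨m+1, by omega⟩ * T * P ⟨m+1, by omega⟩) * Q ⟨m, hm⟩) ≤ ε/3 :=
            le_trans (st4_norm2_mul_proj_le htr (hQmem ⟨m,hm⟩) (hQproj ⟨m,hm⟩) hXq)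
              (hPnorm ⟨m+1, by omega⟩)
          have hboundC : norm2 τ ((e ⟨m,hm⟩ - Q ⟨m, hm⟩) *
              (S ⟨m,hm⟩ * Q ⟨m, hm⟩ - Q ⟨m, hm⟩ * S ⟨m,hm⟩ * Q ⟨m, hm⟩)) ≤ ε/3 := by
            have hprojemQ : IsProjection (e ⟨m,hm⟩ - Q ⟨m, hm⟩) := by
              constructor
              · show star _ = _
                rw [star_sub, hesa m hm, hQsa]
              · rw [sub_mul, mul_sub, mul_sub, heidem m hm, hQidem, heQ m hm, hQle ⟨m,hm⟩]
                abel
            exact le_trans (st4_norm2_proj_mul_le htr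
              (sub_mem (hemem ⟨m,hm⟩) (hQmem ⟨m,hm⟩)) hprojemQ hXS) (hQnorm ⟨m,hm⟩).le
          calc norm2 τ _ ≤ _ := htri1
            _ ≤ _ := add_le_add_left htri2 _
            _ ≤ ε := by linarith
      · -- even case
        obtain ⟨m, hm, hjm⟩ : ∃ m, m < 2^n + 1 ∧ (j:ℕ) = 2*m :=
          ⟨(j:ℕ)/2, by have := j.isLt; omega, by omega⟩
        rw [hP'even j m hm hjm]
        refine ⟨hPmem _, (hPall _).2.1, ?_, le_trans (hPnorm _) (by linarith)⟩
        rw [hPtr]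
        simp only [Fin.val_mk]
        have hcast : ((j:ℕ):ℂ) = 2*((m:ℕ):ℂ) := by exact_mod_cast hjm
        rw [hcast, pow_succ]
        field_simp
    refine ⟨P', ?_, ?_, hall, ?_, ?_⟩
    · rw [hP'even 0 0 (by omega) (by simp)]
      have h1 : (⟨0, by omega⟩ : Fin (2^n+1)) = 0 := by
        apply Fin.ext; simp
      rw [h1, hP0]
    · rw [hP'even (Fin.last (2^(n+1))) (2^n) (by omega) (by rw [Fin.val_last]; omega)]
      have h1 : (⟨2^n, by omega⟩ : Fin (2^n+1)) = Fin.last (2^n) := by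
        apply Fin.ext; simp [Fin.val_last]
      rw [h1, hPlast]
    · apply st4_chain P' (fun j => (hall j).2.1.2)
      intro kk hkk
      by_cases hke : kk % 2 = 1
      · rw [hP'odd ⟨kk, by omega⟩ (kk/2) (by omega) (by show kk = 2*(kk/2)+1; omega),
          hP'even ⟨kk+1, by omega⟩ (kk/2+1) (by omega) (by show kk+1 = 2*(kk/2+1); omega)]
        rw [mul_add, hqp (kk/2) (by omega), hqQ (kk/2) (by omega)]
      · rw [hP'even ⟨kk, by omega⟩ (kk/2) (by omega) (by show kk = 2*(kk/2); omega),
          hP'odd ⟨kk+1, by omega⟩ (kk/2) (by omega) (by show kk+1 = 2*(kk/2)+1; omega)]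
        rw [add_mul, hPidem, hQp (kk/2) (by omega), add_zero]
    · exact st4_distinct P' τ ((2:ℂ)^(n+1)) (pow_ne_zero _ two_ne_zero)
        (fun j => (hall j).2.2.1)
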